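/- Let a, b ∈ ℂ, N ∈ ℕ, and suppose b + 1 + k ≠ 0 for every natural number k < N. Let t ∈ ℂ satisfy t ≠ x and t + 1 ≠ x for every natural number x ≤ N. Then the Stieltjes transform S(t) = ∑_{x=0}^N ((a)_x·(−N)_x/((b + 1)_x·x!))·1/(t − x) of the Hahn weight satisfies (t + 1)·(t + b + 1)·S(t + 1) − (t − N)·(t + a)·S(t) = (b + 1 − a + N)·ν₀, where ν₀ = ∑_{x=0}^N (a)_x·(−N)_x/((b + 1)_x·x!). -/
import Mathlib


open Finset

/-- The Pochhammer symbol `(c)_n = ∏_{j=0}^{n-1} (c + j)`. -/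
noncomputable def poch (c : ℂ) (n : ℕ) : ℂ := ∏ j ∈ Finset.range n, (c + (j : ℂ))

lemma poch_succ (c : ℂ) (n : ℕ) : poch c (n + 1) = poch c n * (c + n) :=
  Finset.prod_range_succ _ _

/-- the Stieltjes transform
`S(t) = ∑_{x=0}^N ((a)_x (-N)_x / ((b+1)_x x!)) / (t-x)` of the Hahn weight satisfies
`(t+1)(t+b+1) S(t+1) - (t-N)(t+a) S(t) = (b+1-a+N) ν₀`. -/
theorem hahn_stieltjes (a b : ℂ) (N : ℕ)
    (hb : ∀ k : ℕ, k < N → b + 1 + (k : ℂ) ≠ 0)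
    (t : ℂ) (ht : ∀ x : ℕ, x ≤ N → t ≠ (x : ℂ)) (ht1 : ∀ x : ℕ, x ≤ N → t + 1 ≠ (x : ℂ)) :
    (t + 1) * (t + b + 1) * (∑ x ∈ Finset.range (N + 1),
        poch a x * poch (-(N : ℂ)) x / (poch (b + 1) x * (x.factorial : ℂ)) *
          (1 / (t + 1 - (x : ℂ))))
      - (t - (N : ℂ)) * (t + a) * (∑ x ∈ Finset.range (N + 1),
        poch a x * poch (-(N : ℂ)) x / (poch (b + 1) x * (x.factorial : ℂ)) *
          (1 / (t - (x : ℂ))))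
      = (b + 1 - a + (N : ℂ)) * ∑ x ∈ Finset.range (N + 1),
          poch a x * poch (-(N : ℂ)) x / (poch (b + 1) x * (x.factorial : ℂ)) := by
  set r : ℕ → ℂ := fun x => poch a x * poch (-(N : ℂ)) x / (poch (b + 1) x * (x.factorial : ℂ))
    with hr
  have hpochb : ∀ x : ℕ, x ≤ N → poch (b + 1) x ≠ 0 := by
    intro x hx
    refine Finset.prod_ne_zero_iff.mpr ?_
    intro j hj
    exact hb j (lt_of_lt_of_le (Finset.mem_range.mp hj) hx)
  have hrN1 : r (N + 1) = 0 := by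
    have h0 : poch (-(N : ℂ)) (N + 1) = 0 := by
      apply Finset.prod_eq_zero (Finset.self_mem_range_succ N)
      simp
    simp [hr, h0]
  have pearson : ∀ x : ℕ, x ≤ N →
      ((x : ℂ) - N) * ((x : ℂ) + a) * r x = ((x : ℂ) + 1) * ((x : ℂ) + b + 1) * r (x + 1) := by
    intro x hx
    rcases eq_or_lt_of_le hx with h | h
    · subst h
      rw [hrN1]
      ring
    · have hb1 : poch (b + 1) x ≠ 0 := hpochb x hx
      have hb2 : b + 1 + (x : ℂ) ≠ 0 := hb x h
      have hf : ((x.factorial : ℂ)) ≠ 0 := by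
        exact_mod_cast Nat.cast_ne_zero.mpr x.factorial_ne_zero
      have hx1 : ((x : ℂ) + 1) ≠ 0 := Nat.cast_add_one_ne_zero x
      rw [hr]
      simp only [poch_succ, Nat.factorial_succ, Nat.cast_mul, Nat.cast_add, Nat.cast_one]
      field_simp
      ring
  -- the telescoping function
  set g : ℕ → ℂ := fun y => (y : ℂ) * ((y : ℂ) + b) * r y * (1 / (t + 1 - (y : ℂ))) with hg
  have hAB : ∑ x ∈ Finset.range (N + 1),
      ((x : ℂ) - N) * ((x : ℂ) + a) * r x * (1 / (t - (x : ℂ)))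
      = ∑ x ∈ Finset.range (N + 1), g x := by
    have step : ∀ x ∈ Finset.range (N + 1),
        ((x : ℂ) - N) * ((x : ℂ) + a) * r x * (1 / (t - (x : ℂ))) = g (x + 1) := by
      intro x hx
      have hx' : x ≤ N := Nat.lt_succ_iff.mp (Finset.mem_range.mp hx)
      rw [hg]
      simp only [Nat.cast_add, Nat.cast_one]
      rw [show t + 1 - ((x : ℂ) + 1) = t - (x : ℂ) by ring,
        show ((x : ℂ) + 1) * ((x : ℂ) + 1 + b) = ((x : ℂ) + 1) * ((x : ℂ) + b + 1) by ring,
        ← pearson x hx']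
    rw [Finset.sum_congr rfl step]
    have h1 : ∑ x ∈ Finset.range (N + 2), g x
        = (∑ x ∈ Finset.range (N + 1), g (x + 1)) + g 0 := Finset.sum_range_succ' g (N + 1)
    have h2 : ∑ x ∈ Finset.range (N + 2), g x
        = (∑ x ∈ Finset.range (N + 1), g x) + g (N + 1) := Finset.sum_range_succ g (N + 1)
    have hg0 : g 0 = 0 := by simp [hg]
    have hgN : g (N + 1) = 0 := by simp [hg, hrN1]
    rw [hg0, add_zero] at h1
    rw [hgN, add_zero] at h2
    rw [← h1, h2]
  -- pointwise main identity
  have key : ∀ x ∈ Finset.range (N + 1),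
      (t + 1) * (t + b + 1) * (r x * (1 / (t + 1 - (x : ℂ))))
        - (t - (N : ℂ)) * (t + a) * (r x * (1 / (t - (x : ℂ))))
      = (b + 1 - a + (N : ℂ)) * r x
        + (g x - ((x : ℂ) - N) * ((x : ℂ) + a) * r x * (1 / (t - (x : ℂ)))) := by
    intro x hx
    have hx' : x ≤ N := Nat.lt_succ_iff.mp (Finset.mem_range.mp hx)
    have hu : t + 1 - (x : ℂ) ≠ 0 := sub_ne_zero.mpr (ht1 x hx')
    have hv : t - (x : ℂ) ≠ 0 := sub_ne_zero.mpr (ht x hx')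
    rw [hg]
    field_simp
    ring
  calc (t + 1) * (t + b + 1) * (∑ x ∈ Finset.range (N + 1), r x * (1 / (t + 1 - (x : ℂ))))
      - (t - (N : ℂ)) * (t + a) * (∑ x ∈ Finset.range (N + 1), r x * (1 / (t - (x : ℂ))))
      = ∑ x ∈ Finset.range (N + 1),
          ((t + 1) * (t + b + 1) * (r x * (1 / (t + 1 - (x : ℂ))))
            - (t - (N : ℂ)) * (t + a) * (r x * (1 / (t - (x : ℂ))))) := by
        rw [Finset.mul_sum, Finset.mul_sum, ← Finset.sum_sub_distrib]
    _ = ∑ x ∈ Finset.range (N + 1),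
          ((b + 1 - a + (N : ℂ)) * r x
            + (g x - ((x : ℂ) - N) * ((x : ℂ) + a) * r x * (1 / (t - (x : ℂ))))) :=
        Finset.sum_congr rfl key
    _ = (b + 1 - a + (N : ℂ)) * ∑ x ∈ Finset.range (N + 1), r x := by
        rw [Finset.sum_add_distrib, Finset.sum_sub_distrib, ← hAB]
        rw [← Finset.mul_sum]
        ring
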